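/- arXiv:2503.07034 — 2 statements merged into one kernel-verified Lean document; each statement's English description precedes it below -/
import Mathlib

section
/- Assume in addition that S⁰ is pure-jump, i.e. for every r ≥ 0, S⁰(r) equals the sum over 0 < s ≤ r of its jumps S⁰(s) − S⁰(s⁻). Then for Lebesgue-almost every t > 0, L is differentiable at t and its derivative equals L′(t) = (1/κ)·1_{{S(L(t)) = t}}; in other words, dL(t)/dt = κ⁻¹ on the set where the overshoot R(t) = S(L(t)) − t vanishes, and dL(t)/dt = 0 where R(t) > 0. -/
open Set MeasureTheory Function Filter Topology Metric
open scoped ENNReal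

lemma cumMeasure_hasDerivAt (E : Set ℝ) (hE : MeasurableSet E) (t : ℝ) (ht : 0 < t)
    (hd : Filter.Tendsto
      (fun r => volume (E ∩ Metric.closedBall t r) / volume (Metric.closedBall t r))
      (nhdsWithin 0 (Set.Ioi 0)) (nhds (E.indicator 1 t))) :
    HasDerivAt (fun u => (volume (E ∩ Set.Ioc 0 u)).toReal)
      (E.indicator (fun _ => (1:ℝ)) t) t := by
  classical
  set d : ℝ := E.indicator (fun _ => (1:ℝ)) t with hddef
  have hfin : ∀ a b : ℝ, volume (E ∩ Ioc a b) ≠ ⊤ := by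
    intro a b
    exact ((measure_mono inter_subset_right).trans_lt
      (by rw [Real.volume_Ioc]; exact ENNReal.ofReal_lt_top)).ne
  have hcbfin : ∀ r : ℝ, volume (E ∩ Metric.closedBall t r) ≠ ⊤ := by
    intro r
    exact ((measure_mono inter_subset_right).trans_lt
      (by rw [Real.volume_closedBall]; exact ENNReal.ofReal_lt_top)).ne
  have hind_ne : (E.indicator (1 : ℝ → ℝ≥0∞) t) ≠ ⊤ := by
    by_cases hmem : t ∈ E
    · simp [indicator_of_mem hmem]
    · simp [indicator_of_notMem hmem]
  have hm : Tendsto (fun r => (volume (E ∩ Metric.closedBall t r)).toReal / (2*r))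
      (nhdsWithin 0 (Ioi 0)) (nhds d) := by
    have h1 := (ENNReal.tendsto_toReal hind_ne).comp hd
    have h2 : (E.indicator (1 : ℝ → ℝ≥0∞) t).toReal = d := by
      by_cases hmem : t ∈ E
      · simp [hddef, indicator_of_mem hmem]
      · simp [hddef, indicator_of_notMem hmem]
    rw [h2] at h1
    apply h1.congr'
    filter_upwards [self_mem_nhdsWithin] with r hr
    have hr0 : (0:ℝ) < r := hr
    simp only [Function.comp_apply]
    rw [ENNReal.toReal_div, Real.volume_closedBall,
      ENNReal.toReal_ofReal (by positivity)]
  rw [hasDerivAt_iff_tendsto_slope]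
  rw [Metric.tendsto_nhdsWithin_nhds]
  intro ε hε
  obtain ⟨δ₀, hδ₀, hδ⟩ := Metric.tendsto_nhdsWithin_nhds.1 hm (ε/4) (by positivity)
  refine ⟨min δ₀ t, lt_min hδ₀ ht, ?_⟩
  intro s hsne hdist
  have hst : s ≠ t := hsne
  set h := |s - t| with hhdef
  have hpos : 0 < h := abs_pos.2 (sub_ne_zero.2 hst)
  have hdist' : dist s t = h := Real.dist_eq s t
  have hhδ₀ : h < δ₀ := lt_of_lt_of_le (hdist' ▸ hdist) (min_le_left _ _)
  have hht : h < t := lt_of_lt_of_le (hdist' ▸ hdist) (min_le_right _ _)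
  have hs0 : 0 < s := by
    rcases abs_lt.1 (hhdef ▸ hht : |s - t| < t) with ⟨h1, _⟩
    linarith
  have hratio := hδ (mem_Ioi.2 hpos)
    (by rw [Real.dist_eq, sub_zero, abs_of_pos hpos]; exact hhδ₀)
  set m := (volume (E ∩ Metric.closedBall t h)).toReal with hmdef
  have hmd : |m - 2*h*d| < ε/2 * h := by
    have e1 : m - 2*h*d = (m/(2*h) - d) * (2*h) := by field_simp
    rw [e1, abs_mul, abs_of_pos (by positivity : (0:ℝ) < 2*h)]
    have hr' : |m/(2*h) - d| < ε/4 := by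
      rw [Real.dist_eq] at hratio; exact hratio
    calc |m/(2*h) - d| * (2*h) < ε/4 * (2*h) :=
          mul_lt_mul_of_pos_right hr' (by positivity)
      _ = ε/2 * h := by ring
  have hcore : ∀ Δ : ℝ, 0 ≤ Δ → Δ ≤ h → Δ ≤ m → m ≤ Δ + h → |Δ/h - d| < ε := by
    intro Δ h0 hΔh h1 h2
    by_cases hmem : t ∈ E
    · have hd1 : d = 1 := by rw [hddef, indicator_of_mem hmem]
      rw [hd1]
      have e2 : -(ε/2*h) < m - 2*h*1 := by
        have h5 := (abs_lt.1 hmd).1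
        rwa [hd1] at h5
      have e3 : h - Δ < ε/2 * h := by linarith
      have e4 : |Δ/h - 1| = (h - Δ)/h := by
        rw [abs_of_nonpos (by rw [sub_nonpos, div_le_one hpos]; exact hΔh)]
        field_simp
        ring
      rw [e4]
      have e5 : (h - Δ)/h < ε/2 := by
        rw [div_lt_iff₀ hpos]; linarith
      linarith
    · have hd0 : d = 0 := by rw [hddef, indicator_of_notMem hmem]
      rw [hd0, sub_zero, abs_of_nonneg (by positivity)]
      have e2 : m < ε/2 * h := by
        have := (abs_lt.1 hmd).2
        rw [hd0] at this
        linarith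
      have e5 : Δ/h < ε/2 := by
        rw [div_lt_iff₀ hpos]; nlinarith
      linarith
  rw [Real.dist_eq]
  rcases hst.lt_or_gt with hlt | hgt
  · -- s < t, h = t - s
    have hh : h = t - s := by rw [hhdef, abs_of_neg (by linarith : s - t < 0)]; ring
    have hdisj : Disjoint (E ∩ Ioc 0 s) (E ∩ Ioc s t) :=
      (Set.Ioc_disjoint_Ioc_of_le le_rfl).mono inter_subset_right inter_subset_right
    have hsplit : volume (E ∩ Ioc 0 t) = volume (E ∩ Ioc 0 s) + volume (E ∩ Ioc s t) := by
      rw [← measure_union hdisj (hE.inter measurableSet_Ioc), ← inter_union_distrib_left,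
        Ioc_union_Ioc_eq_Ioc hs0.le hlt.le]
    set Δ := (volume (E ∩ Ioc s t)).toReal with hΔdef
    have hFeq : (volume (E ∩ Ioc 0 t)).toReal = (volume (E ∩ Ioc 0 s)).toReal + Δ := by
      rw [hsplit, ENNReal.toReal_add (hfin 0 s) (hfin s t)]
    have hslope : slope (fun u => (volume (E ∩ Ioc 0 u)).toReal) t s = Δ/h := by
      rw [slope_def_field, hFeq, hh]
      rw [show (volume (E ∩ Ioc 0 s)).toReal - ((volume (E ∩ Ioc 0 s)).toReal + Δ) = -Δ by ring,
        show s - t = -(t - s) by ring, neg_div_neg_eq]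
    have hΔ0 : 0 ≤ Δ := ENNReal.toReal_nonneg
    have hΔh : Δ ≤ h := by
      rw [hh]
      have h1 : volume (E ∩ Ioc s t) ≤ ENNReal.ofReal (t - s) := by
        rw [← Real.volume_Ioc]; exact measure_mono inter_subset_right
      have := ENNReal.toReal_mono ENNReal.ofReal_ne_top h1
      rwa [ENNReal.toReal_ofReal (by linarith)] at this
    have hΔm : Δ ≤ m := by
      apply (ENNReal.toReal_le_toReal (hfin s t) (hcbfin h)).2
      apply measure_mono
      apply inter_subset_inter_right
      intro x hx
      rw [Real.closedBall_eq_Icc]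
      have hx1 : s < x := hx.1
      have hx2 : x ≤ t := hx.2
      constructor
      · linarith
      · linarith
    have hmΔ : m ≤ Δ + h := by
      have hsub2 : E ∩ Metric.closedBall t h ⊆ (E ∩ Ioc s t) ∪ (Icc t (t+h) ∪ {s}) := by
        rintro x ⟨hxE, hxb⟩
        rw [Real.closedBall_eq_Icc] at hxb
        have hx1 : t - h ≤ x := hxb.1
        have hx2 : x ≤ t + h := hxb.2
        rcases le_or_gt x t with hle | hgt'
        · rcases eq_or_lt_of_le (show s ≤ x by linarith) with h2 | h2
          · right; right; exact mem_singleton_iff.2 h2.symm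
          · left; exact ⟨hxE, h2, hle⟩
        · right; left; exact ⟨hgt'.le, hx2⟩
      have hb : volume (E ∩ Metric.closedBall t h) ≤ volume (E ∩ Ioc s t) + ENNReal.ofReal h := by
        calc volume (E ∩ Metric.closedBall t h)
            ≤ volume ((E ∩ Ioc s t) ∪ (Icc t (t+h) ∪ {s})) := measure_mono hsub2
          _ ≤ volume (E ∩ Ioc s t) + volume (Icc t (t+h) ∪ {s}) := measure_union_le _ _
          _ ≤ volume (E ∩ Ioc s t) + (volume (Icc t (t+h)) + volume ({s} : Set ℝ)) :=
              add_le_add le_rfl (measure_union_le _ _)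
          _ = volume (E ∩ Ioc s t) + ENNReal.ofReal h := by
              rw [Real.volume_Icc, Real.volume_singleton, add_zero]
              norm_num
      have := ENNReal.toReal_mono
        (by exact ENNReal.add_ne_top.2 ⟨hfin s t, ENNReal.ofReal_ne_top⟩) hb
      rwa [ENNReal.toReal_add (hfin s t) ENNReal.ofReal_ne_top,
        ENNReal.toReal_ofReal hpos.le] at this
    rw [hslope]
    exact hcore Δ hΔ0 hΔh hΔm hmΔ
  · -- t < s, h = s - t
    have hh : h = s - t := by rw [hhdef, abs_of_pos (by linarith : 0 < s - t)]
    have hdisj : Disjoint (E ∩ Ioc 0 t) (E ∩ Ioc t s) :=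
      (Set.Ioc_disjoint_Ioc_of_le le_rfl).mono inter_subset_right inter_subset_right
    have hsplit : volume (E ∩ Ioc 0 s) = volume (E ∩ Ioc 0 t) + volume (E ∩ Ioc t s) := by
      rw [← measure_union hdisj (hE.inter measurableSet_Ioc), ← inter_union_distrib_left,
        Ioc_union_Ioc_eq_Ioc ht.le hgt.le]
    set Δ := (volume (E ∩ Ioc t s)).toReal with hΔdef
    have hFeq : (volume (E ∩ Ioc 0 s)).toReal = (volume (E ∩ Ioc 0 t)).toReal + Δ := by
      rw [hsplit, ENNReal.toReal_add (hfin 0 t) (hfin t s)]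
    have hslope : slope (fun u => (volume (E ∩ Ioc 0 u)).toReal) t s = Δ/h := by
      rw [slope_def_field, hFeq, hh]
      ring
    have hΔ0 : 0 ≤ Δ := ENNReal.toReal_nonneg
    have hΔh : Δ ≤ h := by
      rw [hh]
      have h1 : volume (E ∩ Ioc t s) ≤ ENNReal.ofReal (s - t) := by
        rw [← Real.volume_Ioc]; exact measure_mono inter_subset_right
      have := ENNReal.toReal_mono ENNReal.ofReal_ne_top h1
      rwa [ENNReal.toReal_ofReal (by linarith)] at this
    have hΔm : Δ ≤ m := by
      apply (ENNReal.toReal_le_toReal (hfin t s) (hcbfin h)).2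
      apply measure_mono
      apply inter_subset_inter_right
      intro x hx
      rw [Real.closedBall_eq_Icc]
      have hx1 : t < x := hx.1
      have hx2 : x ≤ s := hx.2
      constructor
      · linarith
      · linarith
    have hmΔ : m ≤ Δ + h := by
      have hsub2 : E ∩ Metric.closedBall t h ⊆ (E ∩ Ioc t s) ∪ Icc (t-h) t := by
        rintro x ⟨hxE, hxb⟩
        rw [Real.closedBall_eq_Icc] at hxb
        rcases le_or_gt x t with hle | hgt'
        · right; exact ⟨hxb.1, hle⟩
        · left; refine ⟨hxE, hgt', ?_⟩
          have hx2 : x ≤ t + h := hxb.2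
          linarith
      have hb : volume (E ∩ Metric.closedBall t h) ≤ volume (E ∩ Ioc t s) + ENNReal.ofReal h := by
        calc volume (E ∩ Metric.closedBall t h)
            ≤ volume ((E ∩ Ioc t s) ∪ Icc (t-h) t) := measure_mono hsub2
          _ ≤ volume (E ∩ Ioc t s) + volume (Icc (t-h) t) := measure_union_le _ _
          _ = volume (E ∩ Ioc t s) + ENNReal.ofReal h := by
              rw [Real.volume_Icc]; norm_num
      have := ENNReal.toReal_mono
        (by exact ENNReal.add_ne_top.2 ⟨hfin t s, ENNReal.ofReal_ne_top⟩) hb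
      rwa [ENNReal.toReal_add (hfin t s) ENNReal.ofReal_ne_top,
        ENNReal.toReal_ofReal hpos.le] at this
    rw [hslope]
    exact hcore Δ hΔ0 hΔh hΔm hmΔ
open scoped ENNReal

/-- If `S⁰` is pure-jump, then for Lebesgue-a.e. `t > 0`, `L` is differentiable at `t`
with derivative `(1/κ) • 1_{S (L t) = t}`: the derivative equals `κ⁻¹` where the
overshoot `R t = S (L t) - t` vanishes, and `0` where `R t > 0`. -/
theorem inverse_subordinator_ae_deriv_indicator
    (κ : ℝ) (hκ : 0 < κ)
    (S0 : ℝ → ℝ)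
    (hS0_mono : MonotoneOn S0 (Ici 0))
    (hS0_rc : ∀ r ∈ Ici (0 : ℝ), ContinuousWithinAt S0 (Ici r) r)
    (hS0_zero : S0 0 = 0)
    (hS0_nonneg : ∀ r ∈ Ici (0 : ℝ), 0 ≤ S0 r)
    (hS0_pure_jump : ∀ r ∈ Ici (0 : ℝ),
      S0 r = ∑' s : (Ioc (0 : ℝ) r), (S0 s - Function.leftLim S0 s))
    (S : ℝ → ℝ) (hS : ∀ r, S r = κ * r + S0 r)
    (L : ℝ → ℝ) (hL : ∀ t, L t = sInf {r : ℝ | 0 < r ∧ t < S r}) :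
    ∀ᵐ t ∂(volume.restrict (Ioi (0 : ℝ))),
      HasDerivAt L (if S (L t) = t then 1 / κ else 0) t := by
  classical
  set S0' : ℝ → ℝ := fun r => if r ≤ 0 then 0 else S0 r with hS0'def
  set T : ℝ → ℝ := fun r => κ * r + S0' r with hTdef
  have hS0'_eq : ∀ r : ℝ, 0 ≤ r → S0' r = S0 r := by
    intro r hr
    rcases eq_or_lt_of_le hr with h | h
    · simp [hS0'def, ← h, hS0_zero]
    · simp [hS0'def, not_le.2 h]
  have hS0'_nonneg : ∀ r, 0 ≤ S0' r := by
    intro r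
    by_cases h : r ≤ 0
    · simp [hS0'def, h]
    · push_neg at h
      rw [hS0'_eq r h.le]
      exact hS0_nonneg r h.le
  have hS0'_mono : Monotone S0' := by
    intro a b hab
    by_cases hb : b ≤ 0
    · have ha : a ≤ 0 := hab.trans hb
      simp [hS0'def, ha, hb]
    · push_neg at hb
      by_cases ha : a ≤ 0
      · simp only [hS0'def]
        rw [if_pos ha, if_neg (not_le.2 hb)]
        exact hS0_nonneg b hb.le
      · push_neg at ha
        simp only [hS0'def]
        rw [if_neg (not_le.2 ha), if_neg (not_le.2 hb)]
        exact hS0_mono ha.le hb.le hab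
  have hT_eq : ∀ r : ℝ, 0 ≤ r → T r = S r := by
    intro r hr
    rw [hTdef]
    simp only
    rw [hS0'_eq r hr, hS]
  have hT_strict : StrictMono T := by
    intro a b hab
    have h1 : S0' a ≤ S0' b := hS0'_mono hab.le
    have h2 : κ * a < κ * b := by nlinarith
    simp only [hTdef]
    linarith
  have hT_mono : Monotone T := hT_strict.monotone
  have hT0 : T 0 = 0 := by simp [hTdef, hS0'def]
  have hTpos : ∀ r, 0 < r → 0 < T r := fun r hr => hT0 ▸ hT_strict hr
  have hT_rc : ∀ r : ℝ, 0 ≤ r → ContinuousWithinAt T (Ici r) r := by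
    intro r hr
    have h2 : ContinuousWithinAt S0' (Ici r) r := by
      apply (hS0_rc r hr).congr
      · intro x hx
        exact hS0'_eq x (hr.trans hx)
      · exact hS0'_eq r hr
    exact ((continuous_const.mul continuous_id).continuousWithinAt).add h2
  have hleftT : ∀ r : ℝ, Function.leftLim T r = κ * r + Function.leftLim S0' r := by
    intro r
    have h2 : Tendsto S0' (nhdsWithin r (Iio r)) (nhds (Function.leftLim S0' r)) :=
      hS0'_mono.tendsto_leftLim r
    have h3 : Tendsto T (nhdsWithin r (Iio r)) (nhds (κ * r + Function.leftLim S0' r)) := by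
      have h4 : Tendsto (fun x => κ * x) (nhdsWithin r (Iio r)) (nhds (κ * r)) :=
        ((continuous_const.mul continuous_id).tendsto r).mono_left nhdsWithin_le_nhds
      exact h4.add h2
    exact leftLim_eq_of_tendsto h3
  have hleft_le : ∀ r, Function.leftLim T r ≤ T r := fun r => hT_mono.leftLim_le le_rfl
  have hjump_nonneg : ∀ r, 0 ≤ T r - Function.leftLim T r :=
    fun r => sub_nonneg.2 (hleft_le r)
  have hleft_eqS0 : ∀ s : ℝ, 0 < s → Function.leftLim S0 s = Function.leftLim S0' s := by
    intro s hs
    have h2 : Tendsto S0' (nhdsWithin s (Iio s)) (nhds (Function.leftLim S0' s)) :=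
      hS0'_mono.tendsto_leftLim s
    have hev : S0' =ᶠ[nhdsWithin s (Iio s)] S0 := by
      filter_upwards [Ioo_mem_nhdsLT_of_mem (show s ∈ Ioc (0:ℝ) s from ⟨hs, le_rfl⟩)] with x hx
      exact hS0'_eq x hx.1.le
    exact leftLim_eq_of_tendsto (h2.congr' hev)
  have hpjT : ∀ l : ℝ, 0 < l →
      S0' l = ∑' s : (Ioc (0:ℝ) l), (T s - Function.leftLim T s) := by
    intro l hl
    rw [hS0'_eq l hl.le, hS0_pure_jump l hl.le]
    apply tsum_congr
    rintro ⟨s, hs⟩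
    have h1 : S0 s = S0' s := (hS0'_eq s hs.1.le).symm
    rw [h1, hleft_eqS0 s hs.1, hleftT s]
    simp only [hTdef]
    ring
  -- basic facts about L
  have hLT_def : ∀ t, L t = sInf {r : ℝ | 0 < r ∧ t < T r} := by
    intro t
    rw [hL t]
    congr 1
    ext r
    constructor
    · rintro ⟨h1, h2⟩
      exact ⟨h1, by rwa [hT_eq r h1.le]⟩
    · rintro ⟨h1, h2⟩
      exact ⟨h1, by rwa [← hT_eq r h1.le]⟩
  have hA_ne : ∀ t : ℝ, {r : ℝ | 0 < r ∧ t < T r}.Nonempty := by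
    intro t
    have h1 : (0:ℝ) < max 1 (t/κ + 1) := lt_of_lt_of_le one_pos (le_max_left _ _)
    refine ⟨max 1 (t/κ + 1), h1, ?_⟩
    have h3 : t/κ + 1 ≤ max 1 (t/κ + 1) := le_max_right _ _
    have h4 : κ * (t/κ + 1) ≤ κ * max 1 (t/κ + 1) := mul_le_mul_of_nonneg_left h3 hκ.le
    have h5 : κ * (t/κ + 1) = t + κ := by field_simp
    have h6 : 0 ≤ S0' (max 1 (t/κ + 1)) := hS0'_nonneg _
    simp only [hTdef]
    linarith
  have hbdd : ∀ t : ℝ, BddBelow {r : ℝ | 0 < r ∧ t < T r} :=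
    fun t => ⟨0, fun r hr => hr.1.le⟩
  have hL_nonneg : ∀ t, 0 ≤ L t := by
    intro t
    rw [hLT_def]
    exact le_csInf (hA_ne t) (fun r hr => hr.1.le)
  have hlt_of : ∀ t r, L t < r → t < T r := by
    intro t r h
    rw [hLT_def] at h
    obtain ⟨q, hq, hqr⟩ := exists_lt_of_csInf_lt (hA_ne t) h
    exact hq.2.trans_le (hT_mono hqr.le)
  have hle_of : ∀ t r, 0 < t → r < L t → T r ≤ t := by
    intro t r ht h
    by_cases hr : 0 < r
    · by_contra hc
      push_neg at hc
      have h2 : L t ≤ r := by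
        rw [hLT_def]
        exact csInf_le (hbdd t) ⟨hr, hc⟩
      linarith
    · push_neg at hr
      calc T r ≤ T 0 := hT_mono hr
        _ = 0 := hT0
        _ ≤ t := ht.le
  have hTL_ge : ∀ t, 0 ≤ t → t ≤ T (L t) := by
    intro t ht
    have h1 : Tendsto T (nhdsWithin (L t) (Ioi (L t))) (nhds (T (L t))) :=
      (hT_rc (L t) (hL_nonneg t)).mono_left (nhdsWithin_mono _ Ioi_subset_Ici_self)
    refine ge_of_tendsto h1 ?_
    filter_upwards [self_mem_nhdsWithin] with r hr
    exact (hlt_of t r hr).le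
  have hL_pos : ∀ t, 0 < t → 0 < L t := by
    intro t ht
    have hcont : Tendsto T (nhdsWithin 0 (Ioi 0)) (nhds (0:ℝ)) := by
      have := (hT_rc 0 le_rfl).mono_left (nhdsWithin_mono _ Ioi_subset_Ici_self)
      rwa [hT0] at this
    have h1 : ∀ᶠ r in nhdsWithin (0:ℝ) (Ioi 0), T r < t := hcont.eventually_lt_const ht
    obtain ⟨r0, hr0t, hr0⟩ := (h1.and self_mem_nhdsWithin).exists
    have hlb : r0 ≤ L t := by
      rw [hLT_def]
      apply le_csInf (hA_ne t)
      intro q hq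
      by_contra hc
      push_neg at hc
      exact absurd hq.2 (not_lt.2 ((hT_mono hc.le).trans hr0t.le))
    exact lt_of_lt_of_le hr0 hlb
  have hleftL_le : ∀ t, 0 < t → Function.leftLim T (L t) ≤ t := by
    intro t ht
    have h2 : Tendsto T (nhdsWithin (L t) (Iio (L t))) (nhds (Function.leftLim T (L t))) :=
      hT_mono.tendsto_leftLim _
    refine le_of_tendsto h2 ?_
    filter_upwards [self_mem_nhdsWithin] with r hr
    exact hle_of t r ht hr
  have hLofT : ∀ r, 0 < r → L (T r) = r := by
    intro r hr
    rw [hLT_def]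
    have hset : {q : ℝ | 0 < q ∧ T r < T q} = Ioi r := by
      ext q
      simp only [mem_setOf_eq, mem_Ioi]
      constructor
      · rintro ⟨h1, h2⟩
        exact hT_strict.lt_iff_lt.1 h2
      · intro hq
        exact ⟨hr.trans hq, hT_strict hq⟩
    rw [hset, csInf_Ioi]
  -- jump set
  set D : Set ℝ := {r | Function.leftLim T r ≠ T r} with hDdef
  have hD_count : D.Countable := by
    apply hT_mono.countable_not_continuousAt.mono
    intro x hx hcont
    exact hx (leftLim_eq_of_tendsto
      (hcont.tendsto.mono_left nhdsWithin_le_nhds))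
  set Jset : Set ℝ := ⋃ r ∈ D ∩ Ioi (0:ℝ), Ico (Function.leftLim T r) (T r) with hJdef
  have hJ_meas : MeasurableSet Jset :=
    MeasurableSet.biUnion (hD_count.mono inter_subset_left)
      (fun r _ => measurableSet_Ico)
  have hJ_iff : ∀ s, 0 < s → (s ∈ Jset ↔ T (L s) ≠ s) := by
    intro s hs
    constructor
    · intro hsJ
      rw [hJdef, mem_iUnion₂] at hsJ
      obtain ⟨r, ⟨hrD, hr0⟩, hsIco⟩ := hsJ
      have hLs : L s = r := by
        rw [hLT_def]
        refine IsLeast.csInf_eq ⟨⟨hr0, hsIco.2⟩, ?_⟩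
        intro q hq
        by_contra hc
        push_neg at hc
        exact absurd hq.2 (not_lt.2 ((hT_mono.le_leftLim hc).trans hsIco.1))
      rw [hLs]
      exact ne_of_gt hsIco.2
    · intro hne
      have h1 : s < T (L s) := lt_of_le_of_ne (hTL_ge s hs.le) (Ne.symm hne)
      have h2 : Function.leftLim T (L s) ≤ s := hleftL_le s hs
      rw [hJdef, mem_iUnion₂]
      exact ⟨L s, ⟨ne_of_lt (h2.trans_lt h1), hL_pos s hs⟩, h2, h1⟩
  set E : Set ℝ := Ioi 0 \ Jset with hEdef
  have hE_meas : MeasurableSet E := measurableSet_Ioi.diff hJ_meas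
  have hE_iff : ∀ s, 0 < s → (s ∈ E ↔ T (L s) = s) := by
    intro s hs
    rw [hEdef]
    constructor
    · rintro ⟨-, h2⟩
      by_contra hc
      exact h2 ((hJ_iff s hs).2 hc)
    · intro h
      exact ⟨hs, fun hc => ((hJ_iff s hs).1 hc) h⟩
  -- measure of the jump set up to T l
  have hkeyT : ∀ l : ℝ, 0 < l →
      volume (Jset ∩ Ioc 0 (T l)) = ENNReal.ofReal (S0' l) := by
    intro l hl
    set K : Set ℝ := D ∩ Ioc 0 l with hKdef
    have hK_count : K.Countable := hD_count.mono inter_subset_left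
    have hset : Jset ∩ Ioc 0 (T l) =
        ⋃ r ∈ K, Ico (Function.leftLim T r) (T r) := by
      ext s
      rw [mem_inter_iff, hJdef, mem_iUnion₂, mem_iUnion₂]
      constructor
      · rintro ⟨⟨r, ⟨hrD, hr0⟩, hIco⟩, hs0, hsl⟩
        refine ⟨r, ⟨hrD, mem_Ioi.1 hr0, ?_⟩, hIco⟩
        by_contra hc
        push_neg at hc
        have hmid : T l < Function.leftLim T r :=
          lt_of_lt_of_le (hT_strict (show l < (l+r)/2 by linarith))
            (hT_mono.le_leftLim (show (l+r)/2 < r by linarith))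
        have := hIco.1
        have := hIco.2
        linarith [hsl, hIco.1]
      · rintro ⟨r, ⟨hrD, hr0, hrl⟩, hIco⟩
        have hpos : 0 < Function.leftLim T r :=
          lt_of_lt_of_le (hTpos (r/2) (by linarith)) (hT_mono.le_leftLim (by linarith))
        refine ⟨⟨r, ⟨hrD, hr0⟩, hIco⟩, lt_of_lt_of_le hpos hIco.1,
          le_trans hIco.2.le (hT_mono hrl)⟩
    have hdisj : K.PairwiseDisjoint (fun r => Ico (Function.leftLim T r) (T r)) := by
      intro a ha b hb hab
      rcases hab.lt_or_gt with hlt | hlt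
      · apply Set.disjoint_left.2
        intro x hxa hxb
        have h1 : T a ≤ Function.leftLim T b := hT_mono.le_leftLim hlt
        have := hxa.2
        have := hxb.1
        linarith
      · apply Set.disjoint_right.2
        intro x hxb hxa
        have h1 : T b ≤ Function.leftLim T a := hT_mono.le_leftLim hlt
        have := hxb.2
        have := hxa.1
        linarith
    rw [hset, measure_biUnion hK_count hdisj (fun r _ => measurableSet_Ico)]
    have hterm : ∀ r : K, volume (Ico (Function.leftLim T (r:ℝ)) (T (r:ℝ)))
        = ENNReal.ofReal (T (r:ℝ) - Function.leftLim T (r:ℝ)) := fun r => Real.volume_Ico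
    rw [tsum_congr hterm]
    have hKsub : K ⊆ Ioc (0:ℝ) l := inter_subset_right
    have hind : (Ioc (0:ℝ) l).indicator (fun r => T r - Function.leftLim T r)
        = K.indicator (fun r => T r - Function.leftLim T r) := by
      ext r
      by_cases h1 : r ∈ K
      · rw [indicator_of_mem h1, indicator_of_mem (hKsub h1)]
      · by_cases h2 : r ∈ Ioc (0:ℝ) l
        · have hrD : r ∉ D := fun hD => h1 ⟨hD, h2⟩
          rw [indicator_of_mem h2, indicator_of_notMem h1]
          have : Function.leftLim T r = T r := not_not.1 hrD
          linarith
        · rw [indicator_of_notMem h2, indicator_of_notMem h1]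
    have htsum_eq : ∑' r : K, (T (r:ℝ) - Function.leftLim T (r:ℝ)) = S0' l := by
      have e1 := tsum_subtype K (fun r => T r - Function.leftLim T r)
      have e2 := tsum_subtype (Ioc (0:ℝ) l) (fun r => T r - Function.leftLim T r)
      rw [e1, ← hind, ← e2, ← hpjT l hl]
    have hsummable : Summable (fun r : K => T (r:ℝ) - Function.leftLim T (r:ℝ)) := by
      by_contra hns
      have h0 : ∑' r : K, (T (r:ℝ) - Function.leftLim T (r:ℝ)) = 0 :=
        tsum_eq_zero_of_not_summable hns
      have hS0l : S0' l = 0 := by rw [← htsum_eq, h0]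
      apply hns
      have hzero : ∀ r : K, T (r:ℝ) - Function.leftLim T (r:ℝ) = 0 := by
        rintro ⟨r, hrD, hr0, hrl⟩
        have e1 : S0' r ≤ 0 := hS0l ▸ hS0'_mono hrl
        have e2 : 0 ≤ Function.leftLim S0' r :=
          le_trans (hS0'_nonneg (r-1)) (hS0'_mono.le_leftLim (by linarith))
        have e3 : Function.leftLim S0' r ≤ S0' r := hS0'_mono.leftLim_le le_rfl
        rw [hleftT r]
        simp only [hTdef]
        linarith
      rw [show (fun r : K => T (r:ℝ) - Function.leftLim T (r:ℝ)) = fun _ => (0:ℝ)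
        from funext hzero]
      exact summable_zero
    rw [← htsum_eq]
    exact (ENNReal.ofReal_tsum_of_nonneg (fun r : K => hjump_nonneg (r:ℝ)) hsummable).symm
  -- the main identity
  have hkey : ∀ t : ℝ, 0 < t → volume (E ∩ Ioc 0 t) = ENNReal.ofReal (κ * L t) := by
    intro t ht
    have hl0 : 0 < L t := hL_pos t ht
    have hTl : t ≤ T (L t) := hTL_ge t ht.le
    have hET : volume (E ∩ Ioc 0 (T (L t))) = ENNReal.ofReal (κ * L t) := by
      have h1 : E ∩ Ioc 0 (T (L t)) = Ioc 0 (T (L t)) \ (Jset ∩ Ioc 0 (T (L t))) := by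
        rw [hEdef]
        ext x
        simp only [mem_diff, mem_inter_iff, mem_Ioc, mem_Ioi]
        tauto
      have hfinJ : volume (Jset ∩ Ioc 0 (T (L t))) ≠ ⊤ := by
        rw [hkeyT (L t) hl0]
        exact ENNReal.ofReal_ne_top
      rw [h1, measure_diff inter_subset_right
        ((hJ_meas.inter measurableSet_Ioc).nullMeasurableSet) hfinJ,
        hkeyT (L t) hl0, Real.volume_Ioc, sub_zero,
        ← ENNReal.ofReal_sub _ (hS0'_nonneg (L t))]
      congr 1
      simp only [hTdef]
      ring
    rcases eq_or_lt_of_le hTl with he | hlt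
    · have heq : E ∩ Ioc 0 t = E ∩ Ioc 0 (T (L t)) := by rw [← he]
      rw [heq]
      exact hET
    · have hsub : E ∩ Ioc 0 (T (L t)) ⊆ (E ∩ Ioc 0 t) ∪ {T (L t)} := by
        rintro x ⟨hxE, hx0, hxl⟩
        rcases eq_or_lt_of_le hxl with h | h
        · right
          exact mem_singleton_iff.2 h
        · by_cases hxt : x ≤ t
          · left
            exact ⟨hxE, hx0, hxt⟩
          · exfalso
            push_neg at hxt
            have hxJ : x ∈ Jset := by
              rw [hJdef, mem_iUnion₂]
              exact ⟨L t, ⟨ne_of_lt (lt_of_le_of_lt (hleftL_le t ht) hlt), hl0⟩,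
                le_trans (hleftL_le t ht) hxt.le, h⟩
            exact hxE.2 hxJ
      have h2 : volume (E ∩ Ioc 0 (T (L t))) ≤ volume (E ∩ Ioc 0 t) := by
        calc volume (E ∩ Ioc 0 (T (L t))) ≤ volume ((E ∩ Ioc 0 t) ∪ {T (L t)}) :=
              measure_mono hsub
          _ ≤ volume (E ∩ Ioc 0 t) + volume ({T (L t)} : Set ℝ) := measure_union_le _ _
          _ = volume (E ∩ Ioc 0 t) := by rw [Real.volume_singleton, add_zero]
      have h3 : volume (E ∩ Ioc 0 t) ≤ volume (E ∩ Ioc 0 (T (L t))) :=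
        measure_mono (inter_subset_inter_right _ (Ioc_subset_Ioc_right hTl))
      rw [le_antisymm h3 h2]
      exact hET
  -- conclude via Lebesgue density
  have hbes := Besicovitch.ae_tendsto_measure_inter_div_of_measurableSet volume hE_meas
  rw [ae_restrict_iff' measurableSet_Ioi]
  filter_upwards [hbes] with t hdens ht
  have ht0 : (0:ℝ) < t := ht
  have hF := cumMeasure_hasDerivAt E hE_meas t ht0 hdens
  have hFL : ∀ u : ℝ, 0 < u → (volume (E ∩ Ioc 0 u)).toReal = κ * L u := by
    intro u hu
    rw [hkey u hu, ENNReal.toReal_ofReal (mul_nonneg hκ.le (hL_nonneg u))]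
  have h1 : HasDerivAt (fun u => κ⁻¹ * (volume (E ∩ Ioc 0 u)).toReal)
      (κ⁻¹ * (E.indicator (fun _ => (1:ℝ)) t)) t := hF.const_mul _
  have h2 : HasDerivAt L (κ⁻¹ * (E.indicator (fun _ => (1:ℝ)) t)) t := by
    apply h1.congr_of_eventuallyEq
    filter_upwards [Ioi_mem_nhds ht0] with u hu
    rw [hFL u hu, ← mul_assoc, inv_mul_cancel₀ hκ.ne', one_mul]
  have hiff : S (L t) = t ↔ t ∈ E := by
    rw [← hT_eq (L t) (hL_nonneg t)]
    exact (hE_iff t ht0).symm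
  have hval : (if S (L t) = t then 1/κ else 0) = κ⁻¹ * (E.indicator (fun _ => (1:ℝ)) t) := by
    by_cases hmem : t ∈ E
    · rw [if_pos (hiff.2 hmem), indicator_of_mem hmem, one_div, mul_one]
    · rw [if_neg (fun hc => hmem (hiff.1 hc)), indicator_of_notMem hmem, mul_zero]
  rw [hval]
  exact h2
end

section
/- If (fₙ) is a sequence of measurable functions from X to ℝ, each taking values in U, which is Cauchy with respect to the pseudometric d (i.e. d(fₙ, fₘ) → 0 as n, m → ∞), then there exists a measurable function f : X → ℝ taking values in U such that d(fₙ, f) → 0; that is, the set of U-valued measurable functions equipped with the pseudometric d is complete. -/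
open MeasureTheory Filter

/-- The set of `U`-valued measurable functions on a finite measure space, equipped
with the pseudometric `d(f, g) := μ {x | f x ≠ g x}`, is complete: every Cauchy
sequence converges to a measurable `U`-valued function in this pseudometric. -/
theorem control_set_complete
    {X : Type*} [MeasurableSpace X] (μ : Measure X) [IsFiniteMeasure μ]
    (U : Set ℝ) (hU_ne : U.Nonempty) (hU_closed : IsClosed U)
    (f : ℕ → X → ℝ)
    (hf_meas : ∀ n, Measurable (f n))
    (hf_U : ∀ n x, f n x ∈ U)
    (hcauchy : ∀ ε : ENNReal, 0 < ε → ∃ N : ℕ, ∀ m n : ℕ, N ≤ m → N ≤ n →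
      μ {x | f m x ≠ f n x} < ε) :
    ∃ g : X → ℝ, Measurable g ∧ (∀ x, g x ∈ U) ∧
      Tendsto (fun n => μ {x | f n x ≠ g x}) atTop (nhds 0) := by
  classical
  obtain ⟨u0, hu0⟩ := hU_ne
  set c : ℕ → ENNReal := fun k => 2⁻¹ ^ k with hc
  have hc_pos : ∀ k, 0 < c k :=
    fun k => ENNReal.pow_pos (ENNReal.inv_pos.mpr (by norm_num)) k
  have hc_tendsto : Tendsto c atTop (nhds 0) :=
    ENNReal.tendsto_pow_atTop_nhds_zero_of_lt_one (by
      rw [ENNReal.inv_lt_one]; norm_num)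
  choose N hN using fun k => hcauchy (c k) (hc_pos k)
  let n : ℕ → ℕ := fun k => Nat.rec (N 0) (fun k ih => max ih (N (k + 1))) k
  have hnN : ∀ k, N k ≤ n k := by
    intro k; cases k with
    | zero => exact le_refl _
    | succ k => exact le_max_right _ _
  have hn_mono : Monotone n := monotone_nat_of_le_succ fun k => le_max_left _ _
  have key : ∀ k m, n k ≤ m → μ {x | f m x ≠ f (n k) x} < c k :=
    fun k m hm => hN k m (n k) ((hnN k).trans hm) (hnN k)
  set E : ℕ → Set X := fun k => {x | f (n k) x ≠ f (n (k + 1)) x} with hE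
  have hEμ : ∀ k, μ (E k) < c k := fun k =>
    hN k (n k) (n (k + 1)) (hnN k) ((hnN k).trans (hn_mono (Nat.le_succ k)))
  set A : ℕ → Set X := fun k => ⋃ j, E (k + j) with hA
  have hAμ : ∀ k, μ (A k) ≤ 2 * c k := by
    intro k
    calc μ (A k) ≤ ∑' j, μ (E (k + j)) := measure_iUnion_le _
      _ ≤ ∑' j : ℕ, c (k + j) := ENNReal.tsum_le_tsum fun j => (hEμ _).le
      _ = c k * ∑' j : ℕ, c j := by
          simp only [hc, pow_add]; exact ENNReal.tsum_mul_left
      _ = c k * 2 := by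
          rw [hc, ENNReal.tsum_geometric]
          norm_num [ENNReal.one_sub_inv_two]
      _ = 2 * c k := mul_comm _ _
  have hconst : ∀ k x, x ∉ A k → ∀ j, f (n (k + j)) x = f (n k) x := by
    intro k x hx j
    induction j with
    | zero => rfl
    | succ j ih =>
      have hxE : x ∉ E (k + j) := fun h => hx (Set.mem_iUnion.mpr ⟨j, h⟩)
      calc f (n (k + (j + 1))) x = f (n (k + j)) x := (not_not.mp hxE).symm
        _ = f (n k) x := ih
  have htend : ∀ k x, x ∉ A k →
      Tendsto (fun j => f (n j) x) atTop (nhds (f (n k) x)) := by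
    intro k x hx
    apply tendsto_nhds_of_eventually_eq
    filter_upwards [eventually_ge_atTop k] with j hj
    have := hconst k x hx (j - k)
    rwa [Nat.add_sub_cancel' hj] at this
  have hB : μ (⋂ k, A k) = 0 := by
    refine le_antisymm ?_ zero_le
    have h2 : Tendsto (fun k => 2 * c k) atTop (nhds 0) := by
      have := ENNReal.Tendsto.const_mul hc_tendsto
        (Or.inr (by norm_num : (2 : ENNReal) ≠ ⊤))
      simpa using this
    exact ge_of_tendsto' h2 fun k =>
      le_trans (measure_mono (Set.iInter_subset _ k)) (hAμ k)
  have hlim : ∀ᵐ x ∂μ, ∃ l, Tendsto (fun j => f (n j) x) atTop (nhds l) := by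
    rw [ae_iff]
    refine measure_mono_null ?_ hB
    intro x hx
    simp only [Set.mem_setOf_eq, not_exists] at hx
    refine Set.mem_iInter.mpr fun k => ?_
    by_contra hxA
    exact hx (f (n k) x) (htend k x hxA)
  obtain ⟨g0, hg0_meas, hg0_tend⟩ :=
    measurable_limit_of_tendsto_metrizable_ae
      (fun j => (hf_meas (n j)).aemeasurable) hlim
  set g : X → ℝ := fun x => if g0 x ∈ U then g0 x else u0 with hg
  have hg_meas : Measurable g :=
    Measurable.ite (hg0_meas hU_closed.measurableSet) hg0_meas measurable_const
  have hg_U : ∀ x, g x ∈ U := by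
    intro x
    by_cases h : g0 x ∈ U <;> simp [hg, h, hu0]
  refine ⟨g, hg_meas, hg_U, ?_⟩
  set S : Set X := {x | Tendsto (fun j => f (n j) x) atTop (nhds (g0 x))} with hS
  have hSc : μ Sᶜ = 0 := by
    rw [hS, Set.compl_setOf]
    exact ae_iff.mp hg0_tend
  have hk_bound : ∀ k, μ {x | f (n k) x ≠ g x} ≤ 2 * c k := by
    intro k
    have hsub : {x | f (n k) x ≠ g x} ⊆ A k ∪ Sᶜ := by
      intro x hx
      by_contra hmem
      rw [Set.mem_union] at hmem
      push_neg at hmem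
      obtain ⟨hxA, hxS⟩ := hmem
      have hxS' : x ∈ S := not_not.mp (by simpa using hxS)
      have heq : g0 x = f (n k) x := tendsto_nhds_unique hxS' (htend k x hxA)
      have : g x = f (n k) x := by
        rw [hg]
        simp only [heq]
        rw [if_pos (hf_U (n k) x)]
      exact hx this.symm
    calc μ {x | f (n k) x ≠ g x} ≤ μ (A k ∪ Sᶜ) := measure_mono hsub
      _ ≤ μ (A k) + μ Sᶜ := measure_union_le _ _
      _ = μ (A k) := by rw [hSc, add_zero]
      _ ≤ 2 * c k := hAμ k
  rw [ENNReal.tendsto_atTop_zero]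
  intro ε hε
  have h3 : Tendsto (fun k => 3 * c k) atTop (nhds 0) := by
    have := ENNReal.Tendsto.const_mul hc_tendsto
      (Or.inr (by norm_num : (3 : ENNReal) ≠ ⊤))
    simpa using this
  obtain ⟨k, hk⟩ := (h3.eventually (gt_mem_nhds hε)).exists
  refine ⟨n k, fun m hm => ?_⟩
  have hsub : {x | f m x ≠ g x} ⊆ {x | f m x ≠ f (n k) x} ∪ {x | f (n k) x ≠ g x} := by
    intro x hx
    by_cases h : f m x = f (n k) x
    · exact Or.inr (fun h2 => hx (h ▸ h2))
    · exact Or.inl h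
  calc μ {x | f m x ≠ g x}
      ≤ μ ({x | f m x ≠ f (n k) x} ∪ {x | f (n k) x ≠ g x}) := measure_mono hsub
    _ ≤ μ {x | f m x ≠ f (n k) x} + μ {x | f (n k) x ≠ g x} := measure_union_le _ _
    _ ≤ c k + 2 * c k := add_le_add (key k m hm).le (hk_bound k)
    _ = 3 * c k := by ring
    _ ≤ ε := hk.le
end
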